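/- Let M = M₁ ⊕ M₂ be a direct sum of R-modules. If N₁ is PSD in M₁ and N₂ is PSD in M₂, then N₁ ⊕ N₂ is PSD in M. -/

import Mathlib

open Submodule Function LinearMap

universe u v w x y

section Defs

variable (R : Type u) [Ring R]

/-- `I` (a left ideal) is a two-sided ideal. -/
def IsTwoSidedI (I : Ideal R) : Prop := ∀ a b : R, a ∈ I → a * b ∈ I

variable {M : Type v} [AddCommGroup M] [Module R M]

/-- `N` is PSD in the submodule `T` of `M` (taking `T = ⊤` gives "PSD in `M`"):
whenever `N + X = T`, there is a projective direct summand `S` of `T` with `S ≤ N`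
and `T = S ⊕ X`. -/
def PSDIn (T N : Submodule R M) : Prop :=
  ∀ X : Submodule R M, X ≤ T → N ⊔ X = T →
    ∃ S : Submodule R M, Module.Projective R S ∧ S ≤ N ∧ S ⊔ X = T ∧ S ⊓ X = ⊥

/-- `M` is PSD for the ideal `I`: every submodule of `IM` is PSD in `M`. -/
def PSDFor (I : Ideal R) (M : Type v) [AddCommGroup M] [Module R M] : Prop :=
  ∀ N : Submodule R M, N ≤ I • (⊤ : Submodule R M) → PSDIn R ⊤ N

/-- `R` is a left PSD ring for `I`: every finitely generated free left `R`-module is PSD for `I`. -/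
def PSDRing (I : Ideal R) : Prop :=
  ∀ (F : Type u) [AddCommGroup F] [Module R F] [Module.Free R F] [Module.Finite R F],
    PSDFor R I F

/-- `f : P → M` is a projective `I`-cover. -/
def IsProjICover (I : Ideal R) {P : Type w} [AddCommGroup P] [Module R P]
    (f : P →ₗ[R] M) : Prop :=
  Surjective f ∧ Module.Projective R P ∧
    LinearMap.ker f ≤ I • (⊤ : Submodule R P) ∧ PSDIn R ⊤ (LinearMap.ker f)

/-- A projective `I`-cover of `M`. -/
structure ProjICover (I : Ideal R) (M : Type v) [AddCommGroup M] [Module R M] where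
  P : Type w
  [addP : AddCommGroup P]
  [modP : Module R P]
  f : P →ₗ[R] M
  cover : IsProjICover R I f

/-- `R` is `I`-semiregular. -/
def ISemiregular (I : Ideal R) : Prop :=
  ∀ a : R, ∃ P Q : Submodule R R, IsCompl P Q ∧ Module.Projective R P ∧
    P ≤ Submodule.span R {a} ∧ Submodule.span R {a} ⊓ Q ≤ I

/-- `R` is `I`-semiperfect. -/
def ISemiperfect (I : Ideal R) : Prop :=
  ∀ K : Submodule R R, ∃ A B : Submodule R R, IsCompl A B ∧ Module.Projective R A ∧
    A ≤ K ∧ K ⊓ B ≤ I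

end Defs




section Defs2

variable (R : Type u) [Ring R]
variable {M : Type v} [AddCommGroup M] [Module R M]

/-- A submodule `S` is small in the submodule `T` (take `T = ⊤` for "small in `M`"). -/
def SmallIn (T S : Submodule R M) : Prop :=
  ∀ X : Submodule R M, X ≤ T → S ⊔ X = T → X = T

/-- `K` is DM in the submodule `T` of `M`: whenever `K + X = T` there is a direct
summand `S` of `T` with `S ≤ K` and `S + X = T`. -/
def DMIn (T K : Submodule R M) : Prop :=
  ∀ X : Submodule R M, X ≤ T → K ⊔ X = T →
    ∃ S : Submodule R M, S ≤ K ∧ (∃ S' : Submodule R M, S ⊔ S' = T ∧ S ⊓ S' = ⊥) ∧ S ⊔ X = T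

/-- `M` is DM for `I`: every submodule of `IM` is DM in `M`. -/
def DMFor (I : Ideal R) (M : Type v) [AddCommGroup M] [Module R M] : Prop :=
  ∀ K : Submodule R M, K ≤ I • (⊤ : Submodule R M) → DMIn R ⊤ K

/-- `R` is a left DM ring for `I`. -/
def DMRing (I : Ideal R) : Prop :=
  ∀ (F : Type u) [AddCommGroup F] [Module R F] [Module.Free R F] [Module.Finite R F],
    DMFor R I F

/-- `M` is an `I`-supplemented module. -/
def ISupplemented (I : Ideal R) (M : Type v) [AddCommGroup M] [Module R M] : Prop :=
  ∀ X : Submodule R M, ∃ Y : Submodule R M, Module.Projective R Y ∧ X ⊔ Y = ⊤ ∧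
    X ⊓ Y ≤ I • Y ∧ DMIn R Y (X ⊓ Y)

/-- `M` is a finitely `I`-supplemented module. -/
def FinISupplemented (I : Ideal R) (M : Type v) [AddCommGroup M] [Module R M] : Prop :=
  ∀ X : Submodule R M, X.FG → ∃ Y : Submodule R M, Module.Projective R Y ∧ X ⊔ Y = ⊤ ∧
    X ⊓ Y ≤ I • Y ∧ DMIn R Y (X ⊓ Y)

/-- `M` is a supplemented module. -/
def Supplemented (M : Type v) [AddCommGroup M] [Module R M] : Prop :=
  ∀ X : Submodule R M, ∃ Y : Submodule R M, X ⊔ Y = ⊤ ∧ SmallIn R Y (X ⊓ Y)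

/-- `M` is an `I`-semiperfect module. -/
def ISemiperfectMod (I : Ideal R) (M : Type v) [AddCommGroup M] [Module R M] : Prop :=
  ∀ K : Submodule R M, ∃ A B : Submodule R M, IsCompl A B ∧ Module.Projective R A ∧
    A ≤ K ∧ K ⊓ B ≤ I • (⊤ : Submodule R M)

/-- The radical of `M`: the intersection of all maximal submodules. -/
def RadM (M : Type v) [AddCommGroup M] [Module R M] : Submodule R M :=
  sInf {N : Submodule R M | IsCoatom N}

/-- The socle of `M`: the sum of all simple submodules. -/
def SocM (M : Type v) [AddCommGroup M] [Module R M] : Submodule R M :=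
  sSup {N : Submodule R M | IsSimpleModule R N}

/-- `P` is locally projective (lifting version). -/
def LocallyProjective (P : Type w) [AddCommGroup P] [Module R P] : Prop :=
  ∀ (A : Type x) (B : Type y) [AddCommGroup A] [Module R A] [AddCommGroup B] [Module R B]
    (g : A →ₗ[R] B) (f : P →ₗ[R] B), Surjective g →
      ∀ P₀ : Submodule R P, P₀.FG → ∃ h : P →ₗ[R] A, ∀ p ∈ P₀, f p = g (h p)

/-- `P` is locally projective (splitting version). -/
def LocallyProjectiveB (P : Type w) [AddCommGroup P] [Module R P] : Prop :=
  ∀ (N : Type x) [AddCommGroup N] [Module R N] (g : N →ₗ[R] P), Surjective g →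
    ∀ P₀ : Submodule R P, P₀.FG → ∃ h : P →ₗ[R] N, ∀ p ∈ P₀, g (h p) = p


/-- A locally projective `I`-cover of `M`. -/
structure LocProjICover (I : Ideal R) (M : Type v) [AddCommGroup M] [Module R M] where
  P : Type w
  [addP : AddCommGroup P]
  [modP : Module R P]
  f : P →ₗ[R] M
  surj : Surjective f
  locProj : LocallyProjective.{u, w, x, y} R P
  ker_le : LinearMap.ker f ≤ I • (⊤ : Submodule R P)
  psd : PSDIn R ⊤ (LinearMap.ker f)

/-- A locally projective cover of `M`. -/
structure LocProjCover (M : Type v) [AddCommGroup M] [Module R M] where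
  P : Type w
  [addP : AddCommGroup P]
  [modP : Module R P]
  f : P →ₗ[R] M
  surj : Surjective f
  locProj : LocallyProjective.{u, w, x, y} R P
  ker_small : SmallIn R ⊤ (LinearMap.ker f)

/-- A projective cover of `M`. -/
structure ProjCover (M : Type v) [AddCommGroup M] [Module R M] where
  P : Type w
  [addP : AddCommGroup P]
  [modP : Module R P]
  f : P →ₗ[R] M
  surj : Surjective f
  proj : Module.Projective R P
  ker_small : SmallIn R ⊤ (LinearMap.ker f)

/-- `M` is self-projective (quasi-projective). -/
def SelfProjective (M : Type v) [AddCommGroup M] [Module R M] : Prop :=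
  ∀ (K : Submodule R M) (f : M →ₗ[R] M ⧸ K), ∃ h : M →ₗ[R] M, K.mkQ ∘ₗ h = f

/-- A projectivity class of `R`-modules (in a fixed universe). -/
def ProjectivityClass
    (Pc : ∀ (N : Type w) [AddCommGroup N] [Module R N], Prop) : Prop :=
  (∀ (N : Type w) [AddCommGroup N] [Module R N], SelfProjective R N → Pc N) ∧
  (∀ (N P : Type w) [AddCommGroup N] [Module R N] [AddCommGroup P] [Module R P]
      (f : P →ₗ[R] N), Surjective f → Module.Projective R P → Pc (P × N) →
        Module.Projective R N)

/-- `Pc` is closed under direct summands. -/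
def ClosedUnderSummands
    (Pc : ∀ (N : Type w) [AddCommGroup N] [Module R N], Prop) : Prop :=
  ∀ (N P : Type w) [AddCommGroup N] [Module R N] [AddCommGroup P] [Module R P],
    Pc P → ∀ (i : N →ₗ[R] P) (p : P →ₗ[R] N), p ∘ₗ i = LinearMap.id → Pc N

/-- A `Pc`-projective `I`-cover of `M`. -/
structure PProjICover (Pc : ∀ (N : Type w) [AddCommGroup N] [Module R N], Prop)
    (I : Ideal R) (M : Type v) [AddCommGroup M] [Module R M] where
  Q : Type w
  [addQ : AddCommGroup Q]
  [modQ : Module R Q]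
  g : Q →ₗ[R] M
  surj : Surjective g
  memP : Pc Q
  ker_le : LinearMap.ker g ≤ I • (⊤ : Submodule R Q)
  psd : PSDIn R ⊤ (LinearMap.ker g)

end Defs2

/-- If two projective submodules intersect trivially, their sum is projective. -/
lemma projective_sup_of_disjoint {R : Type u} [Ring R] {M : Type v} [AddCommGroup M]
    [Module R M] (S₁ S₂ : Submodule R M) (hd : S₁ ⊓ S₂ = ⊥)
    (q₁ : Module.Projective R S₁) (q₂ : Module.Projective R S₂) :
    Module.Projective R ↥(S₁ ⊔ S₂) := by
  set T : Submodule R M := S₁ ⊔ S₂ with hT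
  set A : Submodule R T := Submodule.comap T.subtype S₁ with hA
  set B : Submodule R T := Submodule.comap T.subtype S₂ with hB
  have hinj : Function.Injective T.subtype := Subtype.val_injective
  have hcompl : IsCompl A B := by
    constructor
    · rw [disjoint_iff, hA, hB, ← Submodule.comap_inf, hd, Submodule.comap_bot,
        Submodule.ker_subtype]
    · rw [codisjoint_iff]
      apply Submodule.map_injective_of_injective hinj
      rw [Submodule.map_sup, hA, hB, Submodule.map_comap_subtype,
        Submodule.map_comap_subtype, Submodule.map_top, Submodule.range_subtype,
        inf_eq_right.mpr (le_sup_left : S₁ ≤ T), inf_eq_right.mpr (le_sup_right : S₂ ≤ T)]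
  have qA : Module.Projective R A :=
    q₁.of_equiv (Submodule.comapSubtypeEquivOfLe (le_sup_left : S₁ ≤ T)).symm
  have qB : Module.Projective R B :=
    q₂.of_equiv (Submodule.comapSubtypeEquivOfLe (le_sup_right : S₂ ≤ T)).symm
  exact Module.Projective.of_equiv (Submodule.prodEquivOfIsCompl A B hcompl)

theorem stmt3 {R : Type u} [Ring R] {M : Type v} [AddCommGroup M] [Module R M]
    (M₁ M₂ N₁ N₂ : Submodule R M) (hM : IsCompl M₁ M₂)
    (h₁ : N₁ ≤ M₁) (h₂ : N₂ ≤ M₂)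
    (p₁ : PSDIn R M₁ N₁) (p₂ : PSDIn R M₂ N₂) :
    PSDIn R ⊤ (N₁ ⊔ N₂) := by
  intro X _ hX
  -- Step 1: apply PSD of N₁ in M₁ with X₁ = (N₂ ⊔ X) ⊓ M₁
  have hsum1 : N₁ ⊔ ((N₂ ⊔ X) ⊓ M₁) = M₁ := by
    have h : (N₁ ⊔ (N₂ ⊔ X)) ⊓ M₁ = N₁ ⊔ ((N₂ ⊔ X) ⊓ M₁) := sup_inf_assoc_of_le _ h₁
    rw [← h, ← sup_assoc, hX, top_inf_eq]
  obtain ⟨S₁, qS₁, hS₁N, hS₁sup, hS₁inf⟩ := p₁ ((N₂ ⊔ X) ⊓ M₁) inf_le_right hsum1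
  have hS₁M₁ : S₁ ≤ M₁ := hS₁N.trans h₁
  -- From S₁ ⊔ X₁ = M₁ and X₁ ≤ N₂ ⊔ X we get S₁ ⊔ N₂ ⊔ X = ⊤
  have hM1le : M₁ ≤ S₁ ⊔ (N₂ ⊔ X) := by
    rw [← hS₁sup]
    exact sup_le_sup_left inf_le_left S₁
  have hstep : S₁ ⊔ (N₂ ⊔ X) = ⊤ := by
    rw [eq_top_iff, ← hX, sup_assoc]
    exact sup_le (h₁.trans hM1le) le_sup_right
  -- Step 2: apply PSD of N₂ in M₂ with X₂ = (S₁ ⊔ X) ⊓ M₂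
  have hsum2 : N₂ ⊔ ((S₁ ⊔ X) ⊓ M₂) = M₂ := by
    have h : (N₂ ⊔ (S₁ ⊔ X)) ⊓ M₂ = N₂ ⊔ ((S₁ ⊔ X) ⊓ M₂) := sup_inf_assoc_of_le _ h₂
    rw [← h, sup_left_comm, hstep, top_inf_eq]
  obtain ⟨S₂, qS₂, hS₂N, hS₂sup, hS₂inf⟩ := p₂ ((S₁ ⊔ X) ⊓ M₂) inf_le_right hsum2
  have hS₂M₂ : S₂ ≤ M₂ := hS₂N.trans h₂
  -- The candidate S = S₁ ⊔ S₂
  refine ⟨S₁ ⊔ S₂, ?_, sup_le_sup hS₁N hS₂N, ?_, ?_⟩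
  · -- projective
    have hd : S₁ ⊓ S₂ = ⊥ := by
      rw [← le_bot_iff]
      calc S₁ ⊓ S₂ ≤ M₁ ⊓ M₂ := inf_le_inf hS₁M₁ hS₂M₂
        _ = ⊥ := hM.inf_eq_bot
    exact projective_sup_of_disjoint S₁ S₂ hd qS₁ qS₂
  · -- sup with X is ⊤
    rw [eq_top_iff, ← hM.sup_eq_top]
    have hM2 : M₂ ≤ (S₁ ⊔ S₂) ⊔ X := by
      rw [← hS₂sup]
      refine sup_le (le_sup_of_le_left le_sup_right) ?_
      exact le_trans inf_le_left (sup_le (le_sup_of_le_left le_sup_left) le_sup_right)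
    have hM1 : M₁ ≤ (S₁ ⊔ S₂) ⊔ X := by
      rw [← hS₁sup]
      refine sup_le (le_sup_of_le_left le_sup_left) ?_
      exact le_trans inf_le_left (sup_le (h₂.trans hM2) le_sup_right)
    exact sup_le hM1 hM2
  · -- intersection with X is ⊥
    rw [eq_bot_iff]
    rintro x ⟨hxS, hxX⟩
    obtain ⟨s₁, hs₁, s₂, hs₂, rfl⟩ := Submodule.mem_sup.mp hxS
    have hs₂X₂ : s₂ ∈ (S₁ ⊔ X) ⊓ M₂ := by
      refine ⟨?_, hS₂M₂ hs₂⟩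
      have he : s₂ = (s₁ + s₂) - s₁ := (add_sub_cancel_left s₁ s₂).symm
      rw [he]
      exact Submodule.sub_mem _ (Submodule.mem_sup_right hxX) (Submodule.mem_sup_left hs₁)
    have hs₂0 : s₂ = 0 := by
      have h : s₂ ∈ S₂ ⊓ ((S₁ ⊔ X) ⊓ M₂) := ⟨hs₂, hs₂X₂⟩
      rwa [hS₂inf, Submodule.mem_bot] at h
    subst hs₂0
    rw [add_zero] at hxX ⊢
    have hs₁X₁ : s₁ ∈ (N₂ ⊔ X) ⊓ M₁ := ⟨Submodule.mem_sup_right hxX, hS₁M₁ hs₁⟩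
    have h : s₁ ∈ S₁ ⊓ ((N₂ ⊔ X) ⊓ M₁) := ⟨hs₁, hs₁X₁⟩
    rwa [hS₁inf, Submodule.mem_bot] at h
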